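/- Let R be an integral domain with quotient field K, let X be an indeterminate over R, and let * be a semistar operation on the polynomial ring R[X] satisfying (R[X])^* = R[X]. Define \bar{*} on R by E^{\bar{*}} = (E[X])^* ∩ K for each nonzero R-submodule E of K, where E[X] denotes the R[X]-submodule of K(X) generated by E. Then R^{\bar{*}} = R; consequently the restriction of \bar{*} to the nonzero fractional ideals of R is a star operation on R. -/

import Mathlib

open Polynomial Pointwise

/-- A *semistar operation* on a domain `S` with quotient field `M`: a map on the
(nonzero) `S`-submodules of `M` satisfying `(aE)^* = aE^*`, `E ⊆ E^*`,
monotonicity and idempotency. -/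
structure IsSemistarOperation (S M : Type*) [CommRing S] [Field M] [Algebra S M]
    (star : Submodule S M → Submodule S M) : Prop where
  smul_eq : ∀ a : M, a ≠ 0 → ∀ E : Submodule S M, E ≠ ⊥ → star (a • E) = a • star E
  le_star : ∀ E : Submodule S M, E ≠ ⊥ → E ≤ star E
  mono : ∀ E F : Submodule S M, E ≠ ⊥ → F ≠ ⊥ → E ≤ F → star E ≤ star F
  idem : ∀ E : Submodule S M, E ≠ ⊥ → star (star E) = star E

variable {R K L : Type*} [CommRing R] [IsDomain R]
  [Field K] [Algebra R K] [IsFractionRing R K]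
  [Field L] [Algebra R[X] L] [IsFractionRing R[X] L]

/-- `E[X]`: the `R[X]`-submodule of `L = K(X)` generated by `E ⊆ K`,
where `ι : K →+* L` is the canonical embedding. -/
noncomputable def polyExt (ι : K →+* L) (E : Submodule R K) : Submodule R[X] L :=
  Submodule.span R[X] (ι '' (E : Set K))

section helpers

variable (ι : K →+* L)

lemma polyExt_ne_bot {E : Submodule R K} (hE : E ≠ ⊥) : polyExt ι E ≠ (⊥ : Submodule R[X] L) := by
  obtain ⟨x, hx, hx0⟩ := Submodule.exists_mem_ne_zero_of_ne_bot hE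
  refine Submodule.ne_bot_iff _ |>.mpr ⟨ι x, Submodule.subset_span ⟨x, hx, rfl⟩, ?_⟩
  exact fun h => hx0 (ι.injective (by simpa using h))

lemma polyExt_mono {E F : Submodule R K} (h : E ≤ F) : polyExt ι E ≤ polyExt ι F :=
  Submodule.span_mono (Set.image_mono h)

lemma polyExt_one (hι : ∀ r : R, ι (algebraMap R K r) = algebraMap R[X] L (C r)) :
    polyExt ι (1 : Submodule R K) = 1 := by
  apply le_antisymm
  · rw [polyExt, Submodule.span_le]
    rintro _ ⟨x, hx, rfl⟩
    obtain ⟨r, rfl⟩ := Submodule.mem_one.mp hx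
    exact Submodule.mem_one.mpr ⟨C r, (hι r).symm⟩
  · rw [Submodule.one_eq_span, Submodule.span_le, Set.singleton_subset_iff]
    exact Submodule.subset_span ⟨1, Submodule.mem_one.mpr ⟨1, map_one _⟩, map_one ι⟩

lemma polyExt_smul (a : K) (E : Submodule R K) :
    polyExt ι (a • E) = ι a • polyExt ι E := by
  unfold polyExt
  rw [Submodule.coe_pointwise_smul, Set.image_smul_distrib, Submodule.smul_span]

lemma mem_one_of_iota_mem_one {x : K}
    (hx : ι x ∈ (1 : Submodule R[X] L))
    (hι : ∀ r : R, ι (algebraMap R K r) = algebraMap R[X] L (C r)) :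
    x ∈ (1 : Submodule R K) := by
  obtain ⟨p, hp⟩ := Submodule.mem_one.mp hx
  obtain ⟨a, b, hb, hab⟩ := IsFractionRing.div_surjective (A := R) x
  have hb0 : b ≠ 0 := nonZeroDivisors.ne_zero hb
  have hbK : algebraMap R K b ≠ 0 := fun h => hb0 (IsFractionRing.injective R K (by simpa using h))
  have hxb : x * algebraMap R K b = algebraMap R K a := by
    field_simp at hab; exact (mul_comm _ _).trans hab.symm
  have hL : algebraMap R[X] L (p * C b) = algebraMap R[X] L (C a) := by
    have := congrArg ι hxb
    rw [map_mul, hι, hι] at this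
    rw [map_mul, hp]; exact this
  have hpoly : p * C b = C a := IsFractionRing.injective R[X] L hL
  have hdeg : p.degree ≤ 0 := by
    have h1 : (p * C b).degree = p.degree := by
      rw [degree_mul, degree_C hb0, add_zero]
    rw [hpoly] at h1
    rw [← h1]; exact degree_C_le
  obtain ⟨r, rfl⟩ : ∃ r, p = C r := ⟨p.coeff 0, eq_C_of_degree_le_zero hdeg⟩
  have hrb : r * b = a := by
    have : C (r * b) = C a := by rw [map_mul]; exact hpoly
    exact C_injective this
  refine Submodule.mem_one.mpr ⟨r, ?_⟩
  have : algebraMap R K r * algebraMap R K b = x * algebraMap R K b := by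
    rw [← map_mul, hrb, hxb]
  exact (mul_right_cancel₀ hbK this)

end helpers

/-- The operation `E ↦ E^{\bar{*}} = (E[X])^* ∩ K` on `R`-submodules of `K` induced by a
semistar operation `*` on `R[X]`. -/
noncomputable def barStar (star : Submodule R[X] L → Submodule R[X] L) (ι : K →+* L)
    (hι : ∀ r : R, ι (algebraMap R K r) = algebraMap R[X] L (C r))
    (E : Submodule R K) : Submodule R K where
  carrier := ι ⁻¹' (star (polyExt ι E) : Set L)
  add_mem' := fun {a b} ha hb => by
    simp only [Set.mem_preimage, SetLike.mem_coe, map_add] at *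
    exact (star (polyExt ι _)).add_mem ha hb
  zero_mem' := by
    simp only [Set.mem_preimage, SetLike.mem_coe, map_zero]
    exact (star (polyExt ι _)).zero_mem
  smul_mem' := fun r x hx => by
    simp only [Set.mem_preimage, SetLike.mem_coe] at *
    have h : ι (r • x) = (C r : R[X]) • ι x := by
      rw [Algebra.smul_def, map_mul, hι, Algebra.smul_def]
    rw [h]
    exact (star (polyExt ι _)).smul_mem _ hx

/-- if `(R[X])^* = R[X]`, then `R^{\bar{*}} = R`; consequently the
restriction of `\bar{*}` to the nonzero fractional ideals of `R` is a star operation on `R`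
(it satisfies the semistar axioms and maps nonzero fractional ideals to nonzero
fractional ideals). -/
theorem barStar_one_eq_one
    (star : Submodule R[X] L → Submodule R[X] L)
    (hstar : IsSemistarOperation R[X] L star)
    (hone : star (1 : Submodule R[X] L) = 1)
    (ι : K →+* L)
    (hι : ∀ r : R, ι (algebraMap R K r) = algebraMap R[X] L (C r)) :
    barStar star ι hι (1 : Submodule R K) = 1 ∧
      IsSemistarOperation R K (barStar star ι hι) ∧
      ∀ I : Submodule R K, I ≠ ⊥ → IsFractional (nonZeroDivisors R) I →
        IsFractional (nonZeroDivisors R) (barStar star ι hι I) := by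
  have mem_bs : ∀ (E : Submodule R K) (x : K),
      x ∈ barStar star ι hι E ↔ ι x ∈ star (polyExt ι E) := fun _ _ => Iff.rfl
  have h1 : barStar star ι hι (1 : Submodule R K) = 1 := by
    ext x
    rw [mem_bs, polyExt_one ι hι, hone]
    constructor
    · exact fun h => mem_one_of_iota_mem_one ι h hι
    · intro h
      obtain ⟨r, rfl⟩ := Submodule.mem_one.mp h
      exact Submodule.mem_one.mpr ⟨C r, (hι r).symm⟩
  have hle : ∀ E : Submodule R K, E ≠ ⊥ → E ≤ barStar star ι hι E := by
    intro E hE x hx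
    exact (hstar.le_star _ (polyExt_ne_bot ι hE)) (Submodule.subset_span ⟨x, hx, rfl⟩)
  have hbsne : ∀ E : Submodule R K, E ≠ ⊥ → barStar star ι hι E ≠ ⊥ := by
    intro E hE h
    exact hE (le_bot_iff.mp (h ▸ hle E hE))
  have hmono : ∀ E F : Submodule R K, E ≠ ⊥ → F ≠ ⊥ → E ≤ F →
      barStar star ι hι E ≤ barStar star ι hι F := by
    intro E F hE hF h x hx
    exact hstar.mono _ _ (polyExt_ne_bot ι hE) (polyExt_ne_bot ι hF) (polyExt_mono ι h) hx
  have hsmul : ∀ a : K, a ≠ 0 → ∀ E : Submodule R K, E ≠ ⊥ →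
      barStar star ι hι (a • E) = a • barStar star ι hι E := by
    intro a ha E hE
    have hιa : ι a ≠ 0 := fun h => ha (ι.injective (by simpa using h))
    ext x
    rw [mem_bs, polyExt_smul, hstar.smul_eq (ι a) hιa _ (polyExt_ne_bot ι hE)]
    have hsetL : (ι x ∈ ι a • star (polyExt ι E)) ↔
        ∃ y ∈ star (polyExt ι E), ι a • y = ι x := by
      rw [show (ι x ∈ ι a • star (polyExt ι E)) ↔
          ι x ∈ ((ι a • star (polyExt ι E) : Submodule R[X] L) : Set L) from Iff.rfl,
        Submodule.coe_pointwise_smul]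
      exact Set.mem_smul_set
    rw [hsetL]
    have hsetK : (x ∈ a • barStar star ι hι E) ↔
        ∃ y ∈ barStar star ι hι E, a • y = x := by
      rw [show (x ∈ a • barStar star ι hι E) ↔
          x ∈ ((a • barStar star ι hι E : Submodule R K) : Set K) from Iff.rfl,
        Submodule.coe_pointwise_smul]
      exact Set.mem_smul_set
    rw [hsetK]
    constructor
    · rintro ⟨y, hy, hyx⟩
      refine ⟨a⁻¹ * x, ?_, by rw [smul_eq_mul]; field_simp⟩
      rw [mem_bs, map_mul, map_inv₀]
      have : (ι a)⁻¹ * ι x = y := by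
        rw [← hyx]; simp [smul_eq_mul]; field_simp
      rwa [this]
    · rintro ⟨y, hy, rfl⟩
      exact ⟨ι y, hy, by simp [smul_eq_mul]⟩
  have hstarne : ∀ F : Submodule R[X] L, F ≠ ⊥ → star F ≠ ⊥ := by
    intro F hF h
    exact hF (le_bot_iff.mp (h ▸ hstar.le_star F hF))
  refine ⟨h1, ⟨hsmul, hle, hmono, ?_⟩, ?_⟩
  · intro E hE
    have h2 : polyExt ι (barStar star ι hι E) ≤ star (polyExt ι E) := by
      rw [polyExt, Submodule.span_le]
      rintro _ ⟨x, hx, rfl⟩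
      exact hx
    have key : star (polyExt ι (barStar star ι hι E)) = star (polyExt ι E) := by
      apply le_antisymm
      · calc star (polyExt ι (barStar star ι hι E))
            ≤ star (star (polyExt ι E)) :=
              hstar.mono _ _ (polyExt_ne_bot ι (hbsne E hE))
                (hstarne _ (polyExt_ne_bot ι hE)) h2
          _ = star (polyExt ι E) := hstar.idem _ (polyExt_ne_bot ι hE)
      · exact hstar.mono _ _ (polyExt_ne_bot ι hE) (polyExt_ne_bot ι (hbsne E hE))
          (polyExt_mono ι (hle E hE))
    ext x
    rw [mem_bs, mem_bs, key]
  · rintro I hI ⟨a, haS, hfrac⟩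
    refine ⟨a, haS, ?_⟩
    set a' := algebraMap R K a with ha'def
    have ha' : a' ≠ 0 := fun h =>
      nonZeroDivisors.ne_zero haS (IsFractionRing.injective R K (by simpa [ha'def] using h))
    have hone_ne : (1 : Submodule R K) ≠ ⊥ :=
      Submodule.ne_bot_iff _ |>.mpr ⟨1, Submodule.mem_one.mpr ⟨1, map_one _⟩, one_ne_zero⟩
    have hsub : a' • I ≤ (1 : Submodule R K) := by
      intro y hy
      have : y ∈ (a' • (I : Set K)) := by
        rwa [← Submodule.coe_pointwise_smul]
      obtain ⟨b, hb, rfl⟩ := this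
      obtain ⟨c, hc⟩ := hfrac b hb
      refine Submodule.mem_one.mpr ⟨c, ?_⟩
      show algebraMap R K c = a' • b
      rw [smul_eq_mul, ha'def, ← Algebra.smul_def]
      exact hc
    have hne : a' • I ≠ ⊥ := by
      obtain ⟨x, hx, hx0⟩ := Submodule.exists_mem_ne_zero_of_ne_bot hI
      refine Submodule.ne_bot_iff _ |>.mpr
        ⟨a' • x, Submodule.smul_mem_pointwise_smul x a' I hx, ?_⟩
      simp [smul_eq_mul, ha', hx0]
    have hle1 : barStar star ι hι (a' • I) ≤ 1 := by
      rw [← h1]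
      exact hmono _ _ hne hone_ne hsub
    rw [hsmul a' ha' I hI] at hle1
    intro b hb
    obtain ⟨c, hc⟩ := Submodule.mem_one.mp
      (hle1 (Submodule.smul_mem_pointwise_smul b a' _ hb))
    exact ⟨c, by rw [hc, smul_eq_mul, ← Algebra.smul_def]⟩
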